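/- Let q > 0 and T ∈ ℝ, and define G : (−∞,T] × ℝ → ℝ by G(t,x) = (e^T − x·e^t)² / ((1+q)e^{2T} − q·e^{2t}). Then: (i) the denominator satisfies (1+q)e^{2T} − q·e^{2t} ≥ e^{2T} > 0 for all t ≤ T; (ii) G(T,x) = (x−1)² for all x ∈ ℝ; and (iii) for all t < T and all x ∈ ℝ, G satisfies the homogenized Hamilton–Jacobi–Bellman equation ∂_t G(t,x) − x·∂_x G(t,x) − (q/2)·(∂_x G(t,x))² = 0. -/

import Mathlib

/-- The explicit function `G(t,x) = (e^T − x·e^t)² / ((1+q)e^{2T} − q·e^{2t})` of the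
numerical example: (i) its denominator is bounded below by `e^{2T} > 0` for `t ≤ T`;
(ii) it has terminal value `G(T,x) = (x−1)²`; and (iii) for `t < T` it solves the
homogenized HJB equation `∂_t G − x·∂_x G − (q/2)(∂_x G)² = 0`. -/
theorem explicit_value_function_solves_HJB (q T : ℝ) (hq : 0 < q)
    (G : ℝ → ℝ → ℝ)
    (hG : ∀ t x, G t x =
      (Real.exp T - x * Real.exp t) ^ 2
        / ((1 + q) * Real.exp (2 * T) - q * Real.exp (2 * t))) :
    (∀ t ≤ T, Real.exp (2 * T) ≤ (1 + q) * Real.exp (2 * T) - q * Real.exp (2 * t)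
        ∧ 0 < Real.exp (2 * T))
    ∧ (∀ x : ℝ, G T x = (x - 1) ^ 2)
    ∧ (∀ t < T, ∀ x : ℝ,
        deriv (fun s => G s x) t - x * deriv (fun y => G t y) x
          - (q / 2) * (deriv (fun y => G t y) x) ^ 2 = 0) := by
  have hden : ∀ t ≤ T, Real.exp (2 * T) ≤ (1 + q) * Real.exp (2 * T) - q * Real.exp (2 * t) := by
    intro t ht
    have h1 : Real.exp (2 * t) ≤ Real.exp (2 * T) := Real.exp_le_exp.2 (by linarith)
    nlinarith
  refine ⟨fun t ht => ⟨hden t ht, Real.exp_pos _⟩, ?_, ?_⟩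
  · intro x
    rw [hG]
    have h2 : Real.exp (2 * T) = Real.exp T * Real.exp T := by
      rw [← Real.exp_add]; ring_nf
    have hT : Real.exp T ≠ 0 := (Real.exp_pos T).ne'
    have h3 : (1 + q) * (Real.exp T * Real.exp T) - q * (Real.exp T * Real.exp T)
        = Real.exp T * Real.exp T := by ring
    rw [h2, h3, div_eq_iff (mul_ne_zero hT hT)]
    ring
  · intro t ht x
    have hDpos : 0 < (1 + q) * Real.exp (2 * T) - q * Real.exp (2 * t) :=
      lt_of_lt_of_le (Real.exp_pos _) (hden t ht.le)
    have hD : (1 + q) * Real.exp (2 * T) - q * Real.exp (2 * t) ≠ 0 := hDpos.ne'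
    set eT := Real.exp T with heT
    set et := Real.exp t with het
    set A := eT - x * et with hA
    set D := (1 + q) * Real.exp (2 * T) - q * Real.exp (2 * t) with hD2
    -- x-derivative
    have hx : HasDerivAt (fun y => G t y) (2 * A * (-et) / D) x := by
      have h1 : HasDerivAt (fun y : ℝ => eT - y * et) (-et) x := by
        simpa using ((hasDerivAt_id x).mul_const et).const_sub eT
      have h2 : HasDerivAt (fun y : ℝ => (eT - y * et) ^ 2) (2 * A * (-et)) x := by
        simpa [hA] using h1.fun_pow 2
      have h3 := h2.div_const D
      have : (fun y => G t y) = fun y => (eT - y * et) ^ 2 / D := by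
        funext y; rw [hG]
      rw [this]
      simpa using h3
    -- t-derivative
    have htd : HasDerivAt (fun s => G s x)
        ((2 * A * (-(x * et)) * D - A ^ 2 * (-(q * (2 * Real.exp (2 * t))))) / D ^ 2) t := by
      have h1 : HasDerivAt (fun s : ℝ => eT - x * Real.exp s) (-(x * et)) t := by
        simpa [het] using ((Real.hasDerivAt_exp t).const_mul x).const_sub eT
      have h2 : HasDerivAt (fun s : ℝ => (eT - x * Real.exp s) ^ 2)
          (2 * A * (-(x * et))) t := by
        simpa [hA, het] using h1.fun_pow 2
      have h3 : HasDerivAt (fun s : ℝ => (1 + q) * Real.exp (2 * T) - q * Real.exp (2 * s))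
          (-(q * (2 * Real.exp (2 * t)))) t := by
        have : HasDerivAt (fun s : ℝ => Real.exp (2 * s)) (2 * Real.exp (2 * t)) t := by
          have h : HasDerivAt (fun s : ℝ => (2 : ℝ) * s) 2 t := by
            simpa using (hasDerivAt_id t).const_mul 2
          simpa [mul_comm] using h.exp
        simpa using (this.const_mul q).const_sub ((1 + q) * Real.exp (2 * T))
      have h4 := h2.fun_div h3 hD
      have : (fun s => G s x) =
          fun s => (eT - x * Real.exp s) ^ 2 /
            ((1 + q) * Real.exp (2 * T) - q * Real.exp (2 * s)) := by
        funext s; rw [hG]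
      rw [this]
      simpa [hA, het, hD2] using h4
    rw [hx.deriv, htd.deriv]
    have hq2 : Real.exp (2 * t) = et * et := by
      rw [het, ← Real.exp_add]; ring_nf
    rw [hq2] at hD2 ⊢
    field_simp
    ring
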